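/- For any α > 0 and δ' > 0 there exists C > 0 such that for all sufficiently small h > 0, the double integral ∬_{[C₂ h, δ']²} t^{-2/3} s^{-1/2} e^{-α|t-s|/h} dt ds ≤ C h^{5/6}, where C₂ > 0 is any fixed constant. -/

import Mathlib

open MeasureTheory Real

/-- FTC computation: left piece of the exponential integral. -/
lemma ftc_left (β a t : ℝ) (hβ : 0 < β) :
    ∫ s in a..t, Real.exp (β * (s - t)) ≤ β⁻¹ := by
  have hd : ∀ s ∈ Set.uIcc a t,
      HasDerivAt (fun x => β⁻¹ * Real.exp (β * (x - t))) (Real.exp (β * (s - t))) s := by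
    intro s _
    have h1 : HasDerivAt (fun x : ℝ => β * (x - t)) β s := by
      simpa using ((hasDerivAt_id s).sub_const t).const_mul β
    have h2 := (h1.exp).const_mul β⁻¹
    refine h2.congr_deriv ?_
    rw [mul_comm (Real.exp _) β, ← mul_assoc, inv_mul_cancel₀ hβ.ne', one_mul]
  have hi : IntervalIntegrable (fun s => Real.exp (β * (s - t))) volume a t :=
    (Real.continuous_exp.comp (continuous_const.mul (continuous_id.sub continuous_const))).intervalIntegrable _ _
  rw [intervalIntegral.integral_eq_sub_of_hasDerivAt hd hi]
  have e1 : Real.exp (β * (t - t)) = 1 := by simp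
  have e2 : 0 < Real.exp (β * (a - t)) := Real.exp_pos _
  rw [e1]
  have hβi : 0 ≤ β⁻¹ := by positivity
  nlinarith [e2]

/-- FTC computation: right piece of the exponential integral. -/
lemma ftc_right (β t b : ℝ) (hβ : 0 < β) :
    ∫ s in t..b, Real.exp (β * (t - s)) ≤ β⁻¹ := by
  have hd : ∀ s ∈ Set.uIcc t b,
      HasDerivAt (fun x => -β⁻¹ * Real.exp (β * (t - x))) (Real.exp (β * (t - s))) s := by
    intro s _
    have h1 : HasDerivAt (fun x : ℝ => β * (t - x)) (-β) s := by
      simpa using ((hasDerivAt_id s).const_sub t).const_mul β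
    have h2 := (h1.exp).const_mul (-β⁻¹)
    refine h2.congr_deriv ?_
    rw [mul_comm (Real.exp _) (-β), ← mul_assoc, neg_mul_neg, inv_mul_cancel₀ hβ.ne', one_mul]
  have hi : IntervalIntegrable (fun s => Real.exp (β * (t - s))) volume t b :=
    (Real.continuous_exp.comp (continuous_const.mul (continuous_const.sub continuous_id))).intervalIntegrable _ _
  rw [intervalIntegral.integral_eq_sub_of_hasDerivAt hd hi]
  have e1 : Real.exp (β * (t - t)) = 1 := by simp
  have e2 : 0 < Real.exp (β * (t - b)) := Real.exp_pos _
  rw [e1]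
  have hβi : 0 ≤ β⁻¹ := by positivity
  nlinarith [e2]

/-- The integral of `exp (-β |t - s|)` over `[a,b]` is at most `2/β` when `a ≤ t ≤ b`. -/
lemma exp_abs_integral (β a b t : ℝ) (hβ : 0 < β) (hat : a ≤ t) (htb : t ≤ b) :
    ∫ s in Set.Icc a b, Real.exp (-β * |t - s|) ≤ 2 / β := by
  rw [MeasureTheory.integral_Icc_eq_integral_Ioc,
    ← intervalIntegral.integral_of_le (hat.trans htb)]
  have hcont : Continuous fun s : ℝ => Real.exp (-β * |t - s|) :=
    Real.continuous_exp.comp (continuous_const.mul ((continuous_const.sub continuous_id).abs))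
  rw [← intervalIntegral.integral_add_adjacent_intervals (a := a) (b := t) (c := b)
    (hcont.intervalIntegrable _ _) (hcont.intervalIntegrable _ _)]
  have h1 : ∫ s in a..t, Real.exp (-β * |t - s|) ≤ β⁻¹ := by
    have : ∫ s in a..t, Real.exp (-β * |t - s|) = ∫ s in a..t, Real.exp (β * (s - t)) := by
      apply intervalIntegral.integral_congr
      intro s hs
      rw [Set.uIcc_of_le hat] at hs
      have habs : |t - s| = t - s := abs_of_nonneg (by linarith [hs.2])
      show Real.exp (-β * |t - s|) = Real.exp (β * (s - t))
      rw [habs]; congr 1; ring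
    rw [this]; exact ftc_left β a t hβ
  have h2 : ∫ s in t..b, Real.exp (-β * |t - s|) ≤ β⁻¹ := by
    have : ∫ s in t..b, Real.exp (-β * |t - s|) = ∫ s in t..b, Real.exp (β * (t - s)) := by
      apply intervalIntegral.integral_congr
      intro s hs
      rw [Set.uIcc_of_le htb] at hs
      have habs : |t - s| = s - t := by
        rw [abs_sub_comm]; exact abs_of_nonneg (by linarith [hs.1])
      show Real.exp (-β * |t - s|) = Real.exp (β * (t - s))
      rw [habs]; congr 1; ring
    rw [this]; exact ftc_right β t b hβ
  have : 2 / β = β⁻¹ + β⁻¹ := by field_simp; ring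
  rw [this]
  exact add_le_add h1 h2

/-- Key pointwise bound: `s^{-1/2} e^{-β|t-s|} ≤ √M t^{-1/2}` for `s, t ≥ C₂ h`. -/
lemma key_pointwise (C₂ α h t s : ℝ) (hC₂ : 0 < C₂) (hα : 0 < α) (hh : 0 < h)
    (ht : C₂ * h ≤ t) (hs : C₂ * h ≤ s) :
    s ^ (-(1:ℝ)/2) * Real.exp (-(α/(2*h)) * |t - s|)
      ≤ Real.sqrt (max 1 (1/(C₂*α))) * t ^ (-(1:ℝ)/2) := by
  set M : ℝ := max 1 (1/(C₂*α)) with hMdef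
  have hM1 : (1:ℝ) ≤ M := le_max_left _ _
  have hM2 : 1/(C₂*α) ≤ M := le_max_right _ _
  have hM0 : 0 < M := lt_of_lt_of_le one_pos hM1
  have ht0 : 0 < t := lt_of_lt_of_le (by positivity) ht
  have hs0 : 0 < s := lt_of_lt_of_le (by positivity) hs
  have hβ0 : 0 < α/(2*h) := by positivity
  have hsqrtM1 : (1:ℝ) ≤ Real.sqrt M := by
    rw [show (1:ℝ) = Real.sqrt 1 by simp]
    exact Real.sqrt_le_sqrt hM1
  rcases le_total t s with hts | hst
  · -- t ≤ s : easy case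
    have e1 : s ^ (-(1:ℝ)/2) ≤ t ^ (-(1:ℝ)/2) :=
      Real.rpow_le_rpow_of_nonpos ht0 hts (by norm_num)
    have e2 : Real.exp (-(α/(2*h)) * |t - s|) ≤ 1 := by
      rw [Real.exp_le_one_iff]
      have : 0 ≤ |t - s| := abs_nonneg _
      nlinarith
    calc s ^ (-(1:ℝ)/2) * Real.exp (-(α/(2*h)) * |t - s|)
        ≤ s ^ (-(1:ℝ)/2) * 1 := by
          apply mul_le_mul_of_nonneg_left e2 (Real.rpow_nonneg hs0.le _)
      _ = s ^ (-(1:ℝ)/2) := by ring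
      _ ≤ t ^ (-(1:ℝ)/2) := e1
      _ ≤ Real.sqrt M * t ^ (-(1:ℝ)/2) := by
          nlinarith [Real.rpow_nonneg ht0.le (-(1:ℝ)/2)]
  · -- s ≤ t : main case
    set β : ℝ := α/(2*h) with hβdef
    have habs : |t - s| = t - s := abs_of_nonneg (by linarith)
    -- squared inequality
    have key : t ≤ M * s * Real.exp (α/h * (t - s)) := by
      have hexp : α/h * (t - s) + 1 ≤ Real.exp (α/h * (t - s)) := Real.add_one_le_exp _
      have hMs : h/α ≤ M * s := by
        calc h/α = (1/(C₂*α)) * (C₂*h) := by field_simp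
          _ ≤ M * s := by
            apply mul_le_mul hM2 hs (by positivity) hM0.le
      have h1 : t - s ≤ M * s * (α/h * (t - s)) := by
        have h2 : (1:ℝ) ≤ M * s * (α/h) := by
          rw [show M * s * (α/h) = (M*s) / (h/α) by field_simp]
          rw [le_div_iff₀ (by positivity)]
          linarith
        nlinarith [sub_nonneg.2 hst]
      have h3 : s ≤ M * s := le_mul_of_one_le_left hs0.le hM1
      calc t = s + (t - s) := by ring
        _ ≤ M * s + M * s * (α/h * (t - s)) := by linarith
        _ = M * s * (α/h * (t - s) + 1) := by ring
        _ ≤ M * s * Real.exp (α/h * (t - s)) := by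
            apply mul_le_mul_of_nonneg_left hexp (by positivity)
    -- take square roots
    have hexp2 : Real.exp (α/h * (t - s)) = (Real.exp (β * (t - s)))^2 := by
      rw [← Real.exp_nat_mul]
      congr 1
      rw [hβdef]
      field_simp
      ring
    have hsqrt : Real.sqrt t ≤ Real.sqrt M * Real.sqrt s * Real.exp (β * (t - s)) := by
      calc Real.sqrt t ≤ Real.sqrt (M * s * Real.exp (α/h * (t - s))) := Real.sqrt_le_sqrt key
        _ = Real.sqrt M * Real.sqrt s * Real.exp (β * (t - s)) := by
            rw [Real.sqrt_mul (by positivity), Real.sqrt_mul hM0.le, hexp2,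
              Real.sqrt_sq (Real.exp_nonneg _)]
    -- convert rpow to sqrt
    have hrp : ∀ x : ℝ, 0 < x → x ^ (-(1:ℝ)/2) = (Real.sqrt x)⁻¹ := by
      intro x hx
      rw [show (-(1:ℝ)/2) = -(1/2) by norm_num, Real.rpow_neg hx.le, Real.sqrt_eq_rpow]
    rw [hrp s hs0, hrp t ht0, habs]
    rw [inv_mul_eq_div, show Real.sqrt M * (Real.sqrt t)⁻¹ = Real.sqrt M / Real.sqrt t from
      (div_eq_mul_inv _ _).symm, div_le_div_iff₀ (Real.sqrt_pos.2 hs0) (Real.sqrt_pos.2 ht0)]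
    have hepos : 0 < Real.exp (-β * (t - s)) := Real.exp_pos _
    have := mul_le_mul_of_nonneg_right hsqrt hepos.le
    calc Real.exp (-β * (t - s)) * Real.sqrt t
        = Real.sqrt t * Real.exp (-β * (t - s)) := by ring
      _ ≤ Real.sqrt M * Real.sqrt s * Real.exp (β * (t - s)) * Real.exp (-β * (t - s)) := this
      _ = Real.sqrt M * Real.sqrt s * Real.exp (β * (t - s) + -β * (t - s)) := by
          rw [Real.exp_add]; ring
      _ = Real.sqrt M * Real.sqrt s := by simp

/-- For any `α > 0`, `δ' > 0` and any fixed constant `C₂ > 0`, there exists `C > 0` such that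
for all sufficiently small `h > 0`,
`∬_{[C₂ h, δ']²} t^{-2/3} s^{-1/2} e^{-α|t-s|/h} dt ds ≤ C h^{5/6}`. -/
theorem stmt2 (α δ' C₂ : ℝ) (hα : 0 < α) (hδ' : 0 < δ') (hC₂ : 0 < C₂) :
    ∃ C > 0, ∃ h₀ > 0, ∀ h : ℝ, 0 < h → h < h₀ →
      (∫ t in Set.Icc (C₂ * h) δ', ∫ s in Set.Icc (C₂ * h) δ',
          t ^ (-(2:ℝ)/3) * s ^ (-(1:ℝ)/2) * Real.exp (-α * |t - s| / h))
        ≤ C * h ^ ((5:ℝ)/6) := by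
  set M : ℝ := max 1 (1/(C₂*α)) with hMdef
  have hM0 : (0:ℝ) < M := lt_of_lt_of_le one_pos (le_max_left _ _)
  set K : ℝ := Real.sqrt M with hKdef
  have hK0 : 0 < K := Real.sqrt_pos.2 hM0
  refine ⟨24 * K * C₂ ^ (-(1:ℝ)/6) / α, by positivity, δ'/C₂, by positivity, ?_⟩
  intro h hh hhδ
  set a : ℝ := C₂ * h with hadef
  have ha0 : 0 < a := by positivity
  have hab : a ≤ δ' := by
    rw [hadef]
    calc C₂ * h ≤ C₂ * (δ'/C₂) := by nlinarith
      _ = δ' := by field_simp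
  set β : ℝ := α/(2*h) with hβdef
  have hβ0 : 0 < β := by positivity
  -- pointwise bound
  have pt : ∀ t ∈ Set.Icc a δ', ∀ s ∈ Set.Icc a δ',
      t ^ (-(2:ℝ)/3) * s ^ (-(1:ℝ)/2) * Real.exp (-α * |t - s| / h)
        ≤ K * t ^ (-(7:ℝ)/6) * Real.exp (-β * |t - s|) := by
    intro t htmem s hsmem
    have ht0 : 0 < t := lt_of_lt_of_le ha0 htmem.1
    have hs0 : 0 < s := lt_of_lt_of_le ha0 hsmem.1
    have hsplit : Real.exp (-α * |t - s| / h)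
        = Real.exp (-β * |t - s|) * Real.exp (-β * |t - s|) := by
      rw [← Real.exp_add]
      congr 1
      rw [hβdef]
      field_simp
      ring
    have hkey := key_pointwise C₂ α h t s hC₂ hα hh htmem.1 hsmem.1
    have h7 : t ^ (-(7:ℝ)/6) = t ^ (-(2:ℝ)/3) * t ^ (-(1:ℝ)/2) := by
      rw [← Real.rpow_add ht0]
      norm_num
    have he0 : 0 ≤ Real.exp (-β * |t - s|) := Real.exp_nonneg _
    have ht23 : 0 ≤ t ^ (-(2:ℝ)/3) := Real.rpow_nonneg ht0.le _
    calc t ^ (-(2:ℝ)/3) * s ^ (-(1:ℝ)/2) * Real.exp (-α * |t - s| / h)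
        = t ^ (-(2:ℝ)/3) * (s ^ (-(1:ℝ)/2) * Real.exp (-(α/(2*h)) * |t - s|))
            * Real.exp (-β * |t - s|) := by rw [hsplit, hβdef]; ring
      _ ≤ t ^ (-(2:ℝ)/3) * (K * t ^ (-(1:ℝ)/2)) * Real.exp (-β * |t - s|) := by
          apply mul_le_mul_of_nonneg_right _ he0
          exact mul_le_mul_of_nonneg_left hkey ht23
      _ = K * t ^ (-(7:ℝ)/6) * Real.exp (-β * |t - s|) := by rw [h7]; ring
  -- inner integral bound
  have inner_bd : ∀ t ∈ Set.Icc a δ',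
      (∫ s in Set.Icc a δ', t ^ (-(2:ℝ)/3) * s ^ (-(1:ℝ)/2) * Real.exp (-α * |t - s| / h))
        ≤ (K * (2/β)) * t ^ (-(7:ℝ)/6) := by
    intro t htmem
    have ht0 : 0 < t := lt_of_lt_of_le ha0 htmem.1
    have hcont : Continuous fun s : ℝ => K * t ^ (-(7:ℝ)/6) * Real.exp (-β * |t - s|) :=
      continuous_const.mul
        (Real.continuous_exp.comp (continuous_const.mul ((continuous_const.sub continuous_id).abs)))
    have hmono : (∫ s in Set.Icc a δ', t ^ (-(2:ℝ)/3) * s ^ (-(1:ℝ)/2) * Real.exp (-α * |t - s| / h))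
        ≤ ∫ s in Set.Icc a δ', K * t ^ (-(7:ℝ)/6) * Real.exp (-β * |t - s|) := by
      apply integral_mono_of_nonneg
      · exact ae_restrict_of_forall_mem measurableSet_Icc fun s hsmem => by
          have hs0 : 0 < s := lt_of_lt_of_le ha0 hsmem.1
          positivity
      · exact hcont.integrableOn_Icc
      · exact ae_restrict_of_forall_mem measurableSet_Icc fun s hsmem => pt t htmem s hsmem
    have heq : (∫ s in Set.Icc a δ', K * t ^ (-(7:ℝ)/6) * Real.exp (-β * |t - s|))
        = K * t ^ (-(7:ℝ)/6) * ∫ s in Set.Icc a δ', Real.exp (-β * |t - s|) :=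
      integral_const_mul _ _
    have hexp := exp_abs_integral β a δ' t hβ0 htmem.1 htmem.2
    have hKt : 0 ≤ K * t ^ (-(7:ℝ)/6) := by positivity
    calc (∫ s in Set.Icc a δ', t ^ (-(2:ℝ)/3) * s ^ (-(1:ℝ)/2) * Real.exp (-α * |t - s| / h))
        ≤ K * t ^ (-(7:ℝ)/6) * ∫ s in Set.Icc a δ', Real.exp (-β * |t - s|) := by
          rw [← heq]; exact hmono
      _ ≤ K * t ^ (-(7:ℝ)/6) * (2/β) := mul_le_mul_of_nonneg_left hexp hKt
      _ = (K * (2/β)) * t ^ (-(7:ℝ)/6) := by ring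
  -- outer integral bound
  have hcont_out : ContinuousOn (fun t : ℝ => (K * (2/β)) * t ^ (-(7:ℝ)/6)) (Set.Icc a δ') :=
    continuousOn_const.mul (continuousOn_id.rpow_const fun t htmem =>
      Or.inl (ne_of_gt (lt_of_lt_of_le ha0 htmem.1)))
  have outer_mono : (∫ t in Set.Icc a δ', ∫ s in Set.Icc a δ',
        t ^ (-(2:ℝ)/3) * s ^ (-(1:ℝ)/2) * Real.exp (-α * |t - s| / h))
      ≤ ∫ t in Set.Icc a δ', (K * (2/β)) * t ^ (-(7:ℝ)/6) := by
    apply integral_mono_of_nonneg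
    · exact ae_restrict_of_forall_mem measurableSet_Icc fun t htmem => by
        apply setIntegral_nonneg measurableSet_Icc
        intro s hsmem
        have ht0 : 0 < t := lt_of_lt_of_le ha0 htmem.1
        have hs0 : 0 < s := lt_of_lt_of_le ha0 hsmem.1
        positivity
    · exact hcont_out.integrableOn_Icc
    · exact ae_restrict_of_forall_mem measurableSet_Icc inner_bd
  -- compute the outer integral of t^{-7/6}
  have hrpow_int : (∫ t in Set.Icc a δ', t ^ (-(7:ℝ)/6)) ≤ 6 * a ^ (-(1:ℝ)/6) := by
    rw [MeasureTheory.integral_Icc_eq_integral_Ioc, ← intervalIntegral.integral_of_le hab]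
    rw [integral_rpow (Or.inr ⟨by norm_num, by
      rw [Set.uIcc_of_le hab]
      intro hmem
      exact absurd hmem.1 (not_le.2 ha0)⟩)]
    have h1 : (-(7:ℝ)/6 + 1) = -(1:ℝ)/6 := by norm_num
    rw [h1]
    have h2 : 0 ≤ δ' ^ (-(1:ℝ)/6) := Real.rpow_nonneg hδ'.le _
    have h3 : 0 ≤ a ^ (-(1:ℝ)/6) := Real.rpow_nonneg ha0.le _
    rw [div_le_iff_of_neg (by norm_num : (-(1:ℝ)/6) < 0)]
    nlinarith
  have houter2 : (∫ t in Set.Icc a δ', (K * (2/β)) * t ^ (-(7:ℝ)/6))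
      = (K * (2/β)) * ∫ t in Set.Icc a δ', t ^ (-(7:ℝ)/6) := integral_const_mul _ _
  -- final arithmetic
  have hfin : (K * (2/β)) * (6 * a ^ (-(1:ℝ)/6)) = (24 * K * C₂ ^ (-(1:ℝ)/6) / α) * h ^ ((5:ℝ)/6) := by
    have e1 : a ^ (-(1:ℝ)/6) = C₂ ^ (-(1:ℝ)/6) * h ^ (-(1:ℝ)/6) := by
      rw [hadef, Real.mul_rpow hC₂.le hh.le]
    have e2 : 2/β = 4 * h / α := by
      rw [hβdef]; field_simp; ring
    have e3 : h * h ^ (-(1:ℝ)/6) = h ^ ((5:ℝ)/6) := by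
      nth_rewrite 1 [show h = h ^ (1:ℝ) from (Real.rpow_one h).symm]
      rw [← Real.rpow_add hh]
      norm_num
    rw [e1, e2, ← e3]
    field_simp
    ring
  have hK2β : 0 ≤ K * (2/β) := by positivity
  calc (∫ t in Set.Icc a δ', ∫ s in Set.Icc a δ',
        t ^ (-(2:ℝ)/3) * s ^ (-(1:ℝ)/2) * Real.exp (-α * |t - s| / h))
      ≤ (K * (2/β)) * ∫ t in Set.Icc a δ', t ^ (-(7:ℝ)/6) := by
        rw [← houter2]; exact outer_mono
    _ ≤ (K * (2/β)) * (6 * a ^ (-(1:ℝ)/6)) := mul_le_mul_of_nonneg_left hrpow_int hK2β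
    _ = (24 * K * C₂ ^ (-(1:ℝ)/6) / α) * h ^ ((5:ℝ)/6) := hfin
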